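/- Let I = ⟨u_1,...,u_r⟩ be a complete intersection monomial ideal in S = K[x_1,...,x_m] and let P = ⟨y_1,...,y_r⟩ be an associated prime of I with y_i ∈ supp(u_i) for each i. Set f = (∏_{i=1}^r u_i) / (∏_{i=1}^r y_i). Then (I : f) = P, and moreover for any monomial g with (I : g) = P, the monomial f divides g. Consequently v_P(I) = ∑_{i=1}^r deg u_i − r. -/

import Mathlib

open MvPolynomial Ideal

lemma aux_mem_span_monomial_range {K : Type*} [Field K] {σ : Type*} {r : ℕ}
    (c : Fin r → (σ →₀ ℕ)) (p : MvPolynomial σ K) :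
    p ∈ Ideal.span (Set.range fun l => (monomial (c l) (1 : K))) ↔
      ∀ m ∈ p.support, ∃ l, c l ≤ m := by
  have h : (Set.range fun l => (monomial (c l) (1 : K)))
      = (fun s => monomial s (1 : K)) '' (Set.range c) := by
    rw [← Set.range_comp]; rfl
  rw [h, mem_ideal_span_monomial_image]
  simp

lemma aux_degree_add {σ : Type*} (b c : σ →₀ ℕ) :
    (b + c).degree = b.degree + c.degree := by
  show ((b + c).sum fun _ k => k) = (b.sum fun _ k => k) + (c.sum fun _ k => k)
  exact Finsupp.sum_add_index' (fun _ => rfl) (fun _ _ _ => rfl)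

lemma aux_degree_single {σ : Type*} (x : σ) : (Finsupp.single x 1).degree = 1 := by
  show ((Finsupp.single x 1).sum fun _ k => k) = 1
  rw [Finsupp.sum_single_index rfl]

lemma aux_degree_finset_sum {σ ι : Type*} (s : Finset ι) (f : ι → (σ →₀ ℕ)) :
    (∑ i ∈ s, f i).degree = ∑ i ∈ s, (f i).degree := by
  classical
  induction s using Finset.induction with
  | empty => simp
  | @insert a s h ih => rw [Finset.sum_insert h, Finset.sum_insert h, aux_degree_add, ih]


/-- The local v-number of `J` at a prime `P`: the least degree of a homogeneous `f`
with `(J : f) = P`. -/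
noncomputable def vnumberAt {K : Type*} [Field K] {σ : Type*}
    (J P : Ideal (MvPolynomial σ K)) : ℕ :=
  sInf {d : ℕ | ∃ f : MvPolynomial σ K, f.IsHomogeneous d ∧
    Submodule.colon J (Ideal.span {f}) = P}

/-- For a complete intersection monomial ideal `I = ⟨u_1,…,u_r⟩` (monomials with pairwise
disjoint supports), an associated prime `P = ⟨y_1,…,y_r⟩` with `y i ∈ supp (u i)`, and
`f = (∏ u_i)/(∏ y_i)` (with exponent vector `g`): `(I : f) = P`, every monomial `m` with
`(I : m) = P` is divisible by `f`, and `v_P(I) = ∑ deg u_i − r`. -/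
theorem vnumberAt_complete_intersection
    {K : Type*} [Field K] {σ : Type*} (r : ℕ) (e : Fin r → (σ →₀ ℕ))
    (he : ∀ l, e l ≠ 0)
    (hdisj : ∀ l l', l ≠ l' → Disjoint (e l).support (e l').support)
    (u : Fin r → MvPolynomial σ K) (hu : ∀ l, u l = monomial (e l) 1)
    (I : Ideal (MvPolynomial σ K)) (hI : I = Ideal.span (Set.range u))
    (y : Fin r → σ) (hy : ∀ l, y l ∈ (e l).support)
    (P : Ideal (MvPolynomial σ K))
    (hP : P = Ideal.span (Set.range fun l => (X (y l) : MvPolynomial σ K)))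
    (hPass : P ∈ associatedPrimes (MvPolynomial σ K) (MvPolynomial σ K ⧸ I))
    (g : σ →₀ ℕ) (hg : g = ∑ l, (e l - Finsupp.single (y l) 1)) :
    Submodule.colon I (Ideal.span {(monomial g 1 : MvPolynomial σ K)}) = P ∧
    (∀ a : σ →₀ ℕ,
      Submodule.colon I (Ideal.span {(monomial a 1 : MvPolynomial σ K)}) = P → g ≤ a) ∧
    vnumberAt I P = (∑ l, (e l).sum fun _ k => k) - r := by
  classical
  have huf : u = fun l => monomial (e l) 1 := funext hu
  subst huf hI hP hg
  -- basic membership lemmas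
  have memI : ∀ p : MvPolynomial σ K,
      p ∈ Ideal.span (Set.range fun l => (monomial (e l) 1 : MvPolynomial σ K)) ↔
        ∀ m ∈ p.support, ∃ l, e l ≤ m := fun p => aux_mem_span_monomial_range e p
  have memP : ∀ p : MvPolynomial σ K,
      p ∈ Ideal.span (Set.range fun l => (X (y l) : MvPolynomial σ K)) ↔
        ∀ m ∈ p.support, ∃ l, Finsupp.single (y l) 1 ≤ m :=
    fun p => aux_mem_span_monomial_range (fun l => Finsupp.single (y l) 1) p
  have hsupp_uniq : ∀ {l l' : Fin r} {x : σ},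
      x ∈ (e l).support → x ∈ (e l').support → l = l' := by
    intro l l' x h1 h2
    by_contra hne
    exact (Finset.disjoint_left.mp (hdisj l l' hne) h1) h2
  have hsingle_le : ∀ l, Finsupp.single (y l) 1 ≤ e l := fun l =>
    Finsupp.single_le_iff.mpr (Nat.one_le_iff_ne_zero.mpr (Finsupp.mem_support_iff.mp (hy l)))
  have heq_single : ∀ {l : Fin r} {b : σ →₀ ℕ}, b ≤ Finsupp.single (y l) 1 →
      1 ≤ b (y l) → b = Finsupp.single (y l) 1 := by
    intro l b hle hpos
    ext x
    have h := Finsupp.le_def.mp hle x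
    rcases eq_or_ne x (y l) with hx | hx
    · rw [hx] at h ⊢
      rw [Finsupp.single_eq_same] at h ⊢
      omega
    · rw [Finsupp.single_eq_of_ne' (Ne.symm hx)] at h ⊢
      omega
  -- colon membership
  have hcolon_mem : ∀ (a : σ →₀ ℕ) (p : MvPolynomial σ K),
      p ∈ Submodule.colon (Ideal.span (Set.range fun l => (monomial (e l) 1 : MvPolynomial σ K)))
          (Ideal.span {(monomial a 1 : MvPolynomial σ K)}) ↔
        ∀ m ∈ p.support, ∃ l, e l - a ≤ m := by
    intro a p
    rw [Ideal.mem_colon_span_singleton, memI]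
    constructor
    · intro h m hm
      have hmem : (m + a) ∈ (p * monomial a (1 : K)).support := by
        rw [mem_support_iff, coeff_mul_monomial', if_pos le_add_self, add_tsub_cancel_right,
          mul_one]
        exact mem_support_iff.mp hm
      obtain ⟨l, hl⟩ := h _ hmem
      exact ⟨l, tsub_le_iff_right.mpr hl⟩
    · intro h m hm
      rw [mem_support_iff, coeff_mul_monomial'] at hm
      by_cases ham : a ≤ m
      · rw [if_pos ham, mul_one] at hm
        obtain ⟨l, hl⟩ := h _ (mem_support_iff.mpr hm)
        refine ⟨l, ?_⟩
        calc e l ≤ e l - a + a := le_tsub_add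
          _ ≤ (m - a) + a := add_le_add_left hl a
          _ = m := tsub_add_cancel_of_le ham
      · rw [if_neg ham] at hm
        exact absurd rfl hm
  -- characterization
  have hchar : ∀ a : σ →₀ ℕ,
      Submodule.colon (Ideal.span (Set.range fun l => (monomial (e l) 1 : MvPolynomial σ K)))
          (Ideal.span {(monomial a 1 : MvPolynomial σ K)})
        = Ideal.span (Set.range fun l => (X (y l) : MvPolynomial σ K)) ↔
      ∀ l, e l - a = Finsupp.single (y l) 1 := by
    intro a
    constructor
    · intro hc
      have hpos : ∀ l', 1 ≤ (e l' - a) (y l') := by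
        intro l'
        have h1 : (monomial (e l' - a) (1 : K)) ∈
            Submodule.colon (Ideal.span (Set.range fun l => (monomial (e l) 1 : MvPolynomial σ K)))
              (Ideal.span {(monomial a 1 : MvPolynomial σ K)}) := by
          rw [hcolon_mem]
          intro m hm
          rw [support_monomial, if_neg one_ne_zero, Finset.mem_singleton] at hm
          exact ⟨l', hm ▸ le_rfl⟩
        rw [hc, memP] at h1
        obtain ⟨l'', hl''⟩ := h1 _ (by
          rw [support_monomial, if_neg one_ne_zero]; exact Finset.mem_singleton_self _)
        have hyl : 1 ≤ (e l' - a) (y l'') := by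
          have := Finsupp.le_def.mp hl'' (y l'')
          rwa [Finsupp.single_eq_same] at this
        have hmem1 : y l'' ∈ (e l').support :=
          Finsupp.support_tsub (Finsupp.mem_support_iff.mpr (Nat.one_le_iff_ne_zero.mp hyl))
        have hll : l'' = l' := hsupp_uniq (hy l'') hmem1
        rw [hll] at hyl
        exact hyl
      intro l
      have h2 : (X (y l) : MvPolynomial σ K) ∈
          Submodule.colon (Ideal.span (Set.range fun l => (monomial (e l) 1 : MvPolynomial σ K)))
            (Ideal.span {(monomial a 1 : MvPolynomial σ K)}) := by
        rw [hc, memP]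
        intro m hm
        rw [support_X, Finset.mem_singleton] at hm
        exact ⟨l, hm ▸ le_rfl⟩
      rw [hcolon_mem] at h2
      obtain ⟨l', hl'⟩ := h2 (Finsupp.single (y l) 1)
        (by rw [support_X, Finset.mem_singleton])
      have hl'pos := hpos l'
      have h3 := Finsupp.le_def.mp hl' (y l')
      have hyy : y l' = y l := by
        by_contra hne
        rw [Finsupp.single_eq_of_ne' (Ne.symm hne)] at h3
        omega
      have hll : l' = l := hsupp_uniq (hy l') (by rw [hyy]; exact hy l)
      subst hll
      exact heq_single hl' hl'pos
    · intro h
      ext p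
      rw [hcolon_mem, memP]
      simp only [h]
  -- part 1
  have hg1 : ∀ l, e l - (∑ l', (e l' - Finsupp.single (y l') 1)) = Finsupp.single (y l) 1 := by
    intro l
    ext x
    rw [Finsupp.tsub_apply, Finsupp.finset_sum_apply]
    by_cases hx : x ∈ (e l).support
    · have hsum : (∑ l', ((e l' - Finsupp.single (y l') 1 : σ →₀ ℕ)) x)
          = ((e l - Finsupp.single (y l) 1 : σ →₀ ℕ)) x := by
        apply Finset.sum_eq_single
        · intro l' _ hne
          have h0 : e l' x = 0 :=
            Finsupp.notMem_support_iff.mp (fun hmem => hne (hsupp_uniq hmem hx))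
          rw [Finsupp.tsub_apply, h0]
          exact Nat.zero_sub _
        · intro h; exact absurd (Finset.mem_univ l) h
      rw [hsum, Finsupp.tsub_apply]
      have hex : e l x ≠ 0 := Finsupp.mem_support_iff.mp hx
      rcases eq_or_ne x (y l) with hxy | hxy
      · rw [hxy] at hex ⊢
        rw [Finsupp.single_eq_same]
        omega
      · rw [Finsupp.single_eq_of_ne' (Ne.symm hxy)]
        omega
    · have h0 : e l x = 0 := Finsupp.notMem_support_iff.mp hx
      have hs : (Finsupp.single (y l) 1) x = 0 :=
        Finsupp.single_eq_of_ne (fun h => hx (h ▸ hy l))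
      rw [h0, hs]
      exact Nat.zero_sub _
  have hpart1 : Submodule.colon
      (Ideal.span (Set.range fun l => (monomial (e l) 1 : MvPolynomial σ K)))
      (Ideal.span {(monomial (∑ l, (e l - Finsupp.single (y l) 1)) 1 : MvPolynomial σ K)})
      = Ideal.span (Set.range fun l => (X (y l) : MvPolynomial σ K)) := (hchar _).mpr hg1
  -- part 2
  have hpart2 : ∀ a : σ →₀ ℕ,
      Submodule.colon (Ideal.span (Set.range fun l => (monomial (e l) 1 : MvPolynomial σ K)))
          (Ideal.span {(monomial a 1 : MvPolynomial σ K)})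
        = Ideal.span (Set.range fun l => (X (y l) : MvPolynomial σ K)) →
      (∑ l, (e l - Finsupp.single (y l) 1)) ≤ a := by
    intro a ha
    have h := (hchar a).mp ha
    rw [Finsupp.le_def]
    intro x
    rw [Finsupp.finset_sum_apply]
    by_cases hex : ∃ l0, x ∈ (e l0).support
    · obtain ⟨l0, hl0⟩ := hex
      have hsum : (∑ l', ((e l' - Finsupp.single (y l') 1 : σ →₀ ℕ)) x)
          = ((e l0 - Finsupp.single (y l0) 1 : σ →₀ ℕ)) x := by
        apply Finset.sum_eq_single
        · intro l' _ hne
          have h0 : e l' x = 0 :=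
            Finsupp.notMem_support_iff.mp (fun hmem => hne (hsupp_uniq hmem hl0))
          rw [Finsupp.tsub_apply, h0]
          exact Nat.zero_sub _
        · intro hcon; exact absurd (Finset.mem_univ l0) hcon
      rw [hsum, Finsupp.tsub_apply]
      have h0 : e l0 x - a x = (Finsupp.single (y l0) 1) x := by
        rw [← Finsupp.tsub_apply, h l0]
      rcases eq_or_ne x (y l0) with hxy | hxy
      · rw [hxy] at h0 ⊢
        rw [Finsupp.single_eq_same] at h0 ⊢
        omega
      · rw [Finsupp.single_eq_of_ne' (Ne.symm hxy)] at h0 ⊢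
        omega
    · push_neg at hex
      have hz : ∀ l' ∈ Finset.univ, ((e l' - Finsupp.single (y l') 1 : σ →₀ ℕ)) x = 0 := by
        intro l' _
        have h0 : e l' x = 0 := Finsupp.notMem_support_iff.mp (hex l')
        rw [Finsupp.tsub_apply, h0]
        exact Nat.zero_sub _
      rw [Finset.sum_congr rfl hz, Finset.sum_const_zero]
      exact Nat.zero_le _
  -- degree computation
  have hdegpos : ∀ l, 1 ≤ (e l).degree := by
    intro l
    by_contra hcon
    push_neg at hcon
    have hd0 : (e l).degree = 0 := by omega
    exact he l ((Finsupp.degree_eq_zero_iff _).mp hd0)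
  have hdeg : (∑ l, (e l - Finsupp.single (y l) 1)).degree = (∑ l, (e l).degree) - r := by
    rw [aux_degree_finset_sum]
    have h1 : ∀ l ∈ Finset.univ, (e l - Finsupp.single (y l) 1).degree = (e l).degree - 1 := by
      intro l _
      have h2 : (e l - Finsupp.single (y l) 1) + Finsupp.single (y l) 1 = e l :=
        tsub_add_cancel_of_le (hsingle_le l)
      have h3 := congrArg Finsupp.degree h2
      rw [aux_degree_add, aux_degree_single] at h3
      omega
    rw [Finset.sum_congr rfl h1, Finset.sum_tsub_distrib _ (fun l _ => hdegpos l)]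
    simp
  refine ⟨hpart1, hpart2, ?_⟩
  have hPrime : (Ideal.span (Set.range fun l => (X (y l) : MvPolynomial σ K))).IsPrime :=
    hPass.isPrime
  have hmem : ((∑ l, (e l).sum fun _ k => k) - r) ∈ {d : ℕ | ∃ f : MvPolynomial σ K,
      f.IsHomogeneous d ∧
      Submodule.colon (Ideal.span (Set.range fun l => (monomial (e l) 1 : MvPolynomial σ K)))
        (Ideal.span {f}) = Ideal.span (Set.range fun l => (X (y l) : MvPolynomial σ K))} := by
    refine ⟨monomial (∑ l, (e l - Finsupp.single (y l) 1)) 1,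
      isHomogeneous_monomial 1 ?_, hpart1⟩
    exact hdeg
  have hlb : ∀ d ∈ {d : ℕ | ∃ f : MvPolynomial σ K,
      f.IsHomogeneous d ∧
      Submodule.colon (Ideal.span (Set.range fun l => (monomial (e l) 1 : MvPolynomial σ K)))
        (Ideal.span {f}) = Ideal.span (Set.range fun l => (X (y l) : MvPolynomial σ K))},
      ((∑ l, (e l).sum fun _ k => k) - r) ≤ d := by
    rintro d ⟨f, hfhom, hfc⟩
    have hfI : f ∉ Ideal.span (Set.range fun l => (monomial (e l) 1 : MvPolynomial σ K)) := by
      intro hf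
      have h1 : (1 : MvPolynomial σ K) ∈ Submodule.colon
          (Ideal.span (Set.range fun l => (monomial (e l) 1 : MvPolynomial σ K)))
          (Ideal.span {f}) :=
        Ideal.mem_colon_span_singleton.mpr (by rwa [one_mul])
      rw [hfc] at h1
      exact hPrime.ne_top ((Ideal.eq_top_iff_one _).mpr h1)
    rw [memI] at hfI
    push_neg at hfI
    obtain ⟨a, ha, hna⟩ := hfI
    have hal : ∀ l, e l - a = Finsupp.single (y l) 1 := by
      intro l
      have hXP : (X (y l) : MvPolynomial σ K) ∈
          Ideal.span (Set.range fun l => (X (y l) : MvPolynomial σ K)) := by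
        rw [memP]
        intro m hm
        rw [support_X, Finset.mem_singleton] at hm
        exact ⟨l, hm ▸ le_rfl⟩
      have hXf : (X (y l) : MvPolynomial σ K) * f ∈
          Ideal.span (Set.range fun l => (monomial (e l) 1 : MvPolynomial σ K)) := by
        rw [← hfc] at hXP
        exact Ideal.mem_colon_span_singleton.mp hXP
      rw [memI] at hXf
      have hXdef : (X (y l) : MvPolynomial σ K) = monomial (Finsupp.single (y l) 1) 1 := rfl
      have hm : (a + Finsupp.single (y l) 1) ∈
          ((X (y l) : MvPolynomial σ K) * f).support := by
        rw [mem_support_iff, hXdef, mul_comm, coeff_mul_monomial', if_pos le_add_self,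
          add_tsub_cancel_right, mul_one]
        exact mem_support_iff.mp ha
      obtain ⟨l', hl'⟩ := hXf _ hm
      have hle : e l' - a ≤ Finsupp.single (y l) 1 := by
        rw [tsub_le_iff_right, add_comm]
        exact hl'
      have hne0 : e l' - a ≠ 0 := fun h0 => hna l' (tsub_eq_zero_iff_le.mp h0)
      obtain ⟨x, hxs⟩ := Finsupp.support_nonempty_iff.mpr hne0
      have hx0 : (e l' - a) x ≠ 0 := Finsupp.mem_support_iff.mp hxs
      have hxy : x = y l := by
        by_contra hc
        have hh := Finsupp.le_def.mp hle x
        rw [Finsupp.single_eq_of_ne' (Ne.symm hc)] at hh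
        omega
      rw [hxy] at hx0 hxs
      have hysupp : y l ∈ (e l').support := Finsupp.support_tsub hxs
      have hll : l' = l := hsupp_uniq hysupp (hy l)
      rw [hll] at hle hx0
      exact heq_single hle (Nat.one_le_iff_ne_zero.mpr hx0)
    have hga := hpart2 a ((hchar a).mpr hal)
    have hdm : (∑ l, (e l - Finsupp.single (y l) 1)).degree ≤ a.degree := by
      have h1 : (∑ l, (e l - Finsupp.single (y l) 1))
          + (a - ∑ l, (e l - Finsupp.single (y l) 1)) = a := add_tsub_cancel_of_le hga
      have h2 := congrArg Finsupp.degree h1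
      rw [aux_degree_add] at h2
      omega
    have had : a.degree = d := by
      have h3 := hfhom (mem_support_iff.mp ha)
      rw [Finsupp.degree_eq_weight_one]
      exact h3
    have hfin : ((∑ l, (e l).sum fun _ k => k) - r : ℕ)
        = (∑ l, (e l - Finsupp.single (y l) 1)).degree := hdeg.symm
    rw [hfin, ← had]
    exact hdm
  unfold vnumberAt
  exact le_antisymm (Nat.sInf_le hmem) (le_csInf ⟨_, hmem⟩ hlb)
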